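/- The face poset of any planar embedding of a connected Eulerian planar graph G (with at least one edge) is a sphere-like ranked poset of rank 2: (i) each edge lies on the boundary of exactly two faces; (ii) for each face f and vertex v, the number of edges e with v ⋖ e ⋖ f is even; (iii) there is an acyclic matching on the face poset matching all edges. Moreover every vertex (rank-0 element) is covered by an even number of edges. -/

import Mathlib

open scoped Classical

universe u

variable {α : Type u}

/-- A rank function on a partial order, compatible with strict order and covering. -/
structure RankStruct (α : Type u) [PartialOrder α] where
  rk : α → ℕ
  strict_mono : ∀ x y : α, x < y → rk x < rk y
  rk_covBy : ∀ x y : α, x ⋖ y → rk y = rk x + 1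

section Poset

variable [PartialOrder α]

/-- A matching on a ranked poset: a set of covering pairs, each element in at most one pair. -/
def IsMatching (M : Set (α × α)) : Prop :=
  (∀ p ∈ M, p.1 ⋖ p.2) ∧
    ∀ p ∈ M, ∀ q ∈ M, p ≠ q →
      p.1 ≠ q.1 ∧ p.1 ≠ q.2 ∧ p.2 ≠ q.1 ∧ p.2 ≠ q.2

/-- `IsMPathSteps M y l z` : `l` is the list of matched pairs `(x_i, y_i)` of an
`M`-path `y ⋗ x₁ ↣ y₁ ⋗ ⋯ ⋗ x_r ↣ y_r = z`. -/
def IsMPathSteps (M : Set (α × α)) : α → List (α × α) → α → Prop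
  | y, [], z => y = z
  | y, (x, y') :: rest, z => x ⋖ y ∧ (x, y') ∈ M ∧ y ≠ y' ∧ IsMPathSteps M y' rest z

/-- An acyclic matching: a matching with no non-trivial closed `M`-path. -/
def IsAcyclicMatching (M : Set (α × α)) : Prop :=
  IsMatching M ∧ ∀ (y : α) (l : List (α × α)), IsMPathSteps M y l y → l = []

/-- An element is `M`-critical if it occurs in no pair of `M`. -/
def MCritical (M : Set (α × α)) (x : α) : Prop :=
  ∀ p ∈ M, p.1 ≠ x ∧ p.2 ≠ x

/-- Parity (in `ℤ₂`) of the number of `M`-paths from `a` to `b`. -/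
noncomputable def ell (M : Set (α × α)) (a b : α) : ZMod 2 :=
  ({l : List (α × α) | IsMPathSteps M a l b}.ncard : ZMod 2)

/-- Combinatorially sphere-like ranked poset of rank `k`. -/
structure SphereLike (R : RankStruct α) (k : ℕ) : Prop where
  two_le : 2 ≤ k
  rk_le : ∀ x : α, R.rk x ≤ k
  exists_top : ∃ x : α, R.rk x = k
  two_covers : ∀ x : α, R.rk x = k - 1 → {y : α | x ⋖ y}.ncard = 2
  even_mid : ∀ y z : α, R.rk y = k → R.rk z = k - 2 →
      Even {x : α | R.rk x = k - 1 ∧ z ⋖ x ∧ x ⋖ y}.ncard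
  matching : ∃ M : Set (α × α), IsAcyclicMatching M ∧
      ∀ x : α, R.rk x = k - 1 → ¬ MCritical M x

/-- The `ℤ₂` boundary map on chains (functions `α → ℤ₂`). -/
noncomputable def bd [Fintype α] (c : α → ZMod 2) : α → ZMod 2 :=
  fun z => ∑ x : α, if z ⋖ x then c x else 0

end Poset


section Inc

/-- Order on `A ⊕ B` generated by an incidence relation `I : A → B → Prop`. -/
def IncLE {A B : Type*} (I : A → B → Prop) (x y : A ⊕ B) : Prop :=
  x = y ∨ ∃ a b, x = Sum.inl a ∧ y = Sum.inr b ∧ I a b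

/-- The two-level (vertex–edge style) incidence poset. -/
def incPartialOrder {A B : Type*} (I : A → B → Prop) : PartialOrder (A ⊕ B) where
  le := IncLE I
  le_refl x := Or.inl rfl
  le_trans x y z hxy hyz := by
    rcases hxy with rfl | ⟨a, b, rfl, rfl, h⟩
    · exact hyz
    · rcases hyz with rfl | ⟨a', b', h1, h2, h3⟩
      · exact Or.inr ⟨a, b, rfl, rfl, h⟩
      · exact absurd h1 (by simp)
  le_antisymm x y hxy hyx := by
    rcases hxy with rfl | ⟨a, b, rfl, rfl, h⟩
    · rfl
    · rcases hyx with h1 | ⟨a', b', h1, h2, h3⟩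
      · exact h1.symm
      · exact absurd h1 (by simp)

/-- Strict relation of the three-level incidence poset. -/
inductive TriLt {A B C : Type*} (I : A → B → Prop) (J : B → C → Prop) :
    A ⊕ B ⊕ C → A ⊕ B ⊕ C → Prop
  | ab {a b} : I a b → TriLt I J (Sum.inl a) (Sum.inr (Sum.inl b))
  | bc {b c} : J b c → TriLt I J (Sum.inr (Sum.inl b)) (Sum.inr (Sum.inr c))
  | ac {a b c} : I a b → J b c → TriLt I J (Sum.inl a) (Sum.inr (Sum.inr c))

/-- The three-level (vertex–edge–face style) incidence poset. -/
def triPartialOrder {A B C : Type*} (I : A → B → Prop) (J : B → C → Prop) :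
    PartialOrder (A ⊕ B ⊕ C) where
  le x y := x = y ∨ TriLt I J x y
  le_refl x := Or.inl rfl
  le_trans x y z hxy hyz := by
    rcases hxy with rfl | h
    · exact hyz
    · rcases hyz with rfl | h'
      · exact Or.inr h
      · cases h with
        | ab hI => cases h' with
          | bc hJ => exact Or.inr (TriLt.ac hI hJ)
        | bc hJ => cases h'
        | ac hI hJ => cases h'
  le_antisymm x y hxy hyx := by
    rcases hxy with rfl | h
    · rfl
    · rcases hyx with h' | h'
      · exact h'.symm
      · cases h <;> cases h'

/-- The natural rank function of the three-level poset. -/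
def triRk {A B C : Type*} : A ⊕ B ⊕ C → ℕ :=
  Sum.elim (fun _ => 0) (Sum.elim (fun _ => 1) (fun _ => 2))

end Inc

section Graph

open SimpleGraph

variable {V : Type u} (G : SimpleGraph V)

/-- Dart reversal as a permutation. -/
def symmPerm : Equiv.Perm G.Dart where
  toFun := SimpleGraph.Dart.symm
  invFun := SimpleGraph.Dart.symm
  left_inv d := SimpleGraph.Dart.symm_symm d
  right_inv d := SimpleGraph.Dart.symm_symm d

/-- A rotation system (combinatorial embedding) of a graph: a permutation of the darts
fixing tails, acting with a single cycle on the darts at each vertex. -/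
structure RotSys where
  ρ : Equiv.Perm G.Dart
  fst_eq : ∀ d : G.Dart, (ρ d).fst = d.fst
  cyclic : ∀ d d' : G.Dart, d.fst = d'.fst → ∃ n : ℕ, (ρ ^ n) d = d'

variable {G}

/-- The face permutation of a rotation system. -/
def RotSys.phi (E : RotSys G) : Equiv.Perm G.Dart := E.ρ * symmPerm G

/-- Two darts lie on the same face iff they are in the same orbit of the face permutation. -/
def RotSys.faceSetoid (E : RotSys G) : Setoid G.Dart where
  r d d' := ∃ n : ℤ, (E.phi ^ n) d = d'
  iseqv := by
    refine ⟨fun d => ⟨0, rfl⟩, ?_, ?_⟩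
    · rintro d d' ⟨n, rfl⟩
      exact ⟨-n, by rw [← Equiv.Perm.mul_apply, ← zpow_add, neg_add_cancel, zpow_zero,
        Equiv.Perm.one_apply]⟩
    · rintro a b c ⟨n, rfl⟩ ⟨m, rfl⟩
      exact ⟨m + n, by rw [← Equiv.Perm.mul_apply, ← zpow_add]⟩

/-- The faces of the embedding: orbits of the face permutation. -/
def RotSys.Faces (E : RotSys G) : Type u := Quotient E.faceSetoid

/-- The face on the side of a dart. -/
def RotSys.face (E : RotSys G) (d : G.Dart) : E.Faces := Quotient.mk E.faceSetoid d

/-- Planarity of a combinatorial embedding, via Euler's formula. -/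
def RotSys.IsPlanar (E : RotSys G) : Prop :=
  Nat.card V + Nat.card E.Faces = Nat.card G.edgeSet + 2

/-- The partial order of the face poset `V ⊔ E ⊔ F` of an embedded graph. -/
def facePosetOrder (G : SimpleGraph V) (E : RotSys G) :
    PartialOrder (V ⊕ G.edgeSet ⊕ E.Faces) :=
  triPartialOrder (fun (v : V) (e : G.edgeSet) => v ∈ (e : Sym2 V))
    (fun (e : G.edgeSet) (f : E.Faces) => ∃ d : G.Dart, d.edge = (e : Sym2 V) ∧ E.face d = f)

/-- The partial order of the vertex–edge poset `F(T*)` of the dual subgraph with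
edges `E(G) \ E(T)` (vertices are the faces of `G`). -/
def dualTreeOrder (G : SimpleGraph V) (E : RotSys G) (T : SimpleGraph V) :
    PartialOrder (E.Faces ⊕ {e : G.edgeSet // (e : Sym2 V) ∉ T.edgeSet}) :=
  incPartialOrder (fun (f : E.Faces) (e : {e : G.edgeSet // (e : Sym2 V) ∉ T.edgeSet}) =>
    ∃ d : G.Dart, d.edge = (e.1 : Sym2 V) ∧ E.face d = f)

end Graph

/-! ### Auxiliary development -/

namespace Stmt12Aux

set_option linter.unusedSectionVars false

open SimpleGraph

variable {V : Type u} [Fintype V] [DecidableEq V] {G : SimpleGraph V} [DecidableRel G.Adj]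

section FaceBasics

variable (E : RotSys G)

lemma face_phi (d : G.Dart) : E.face (E.phi d) = E.face d := by
  refine (Quotient.sound ?_).symm
  show ∃ n : ℤ, (E.phi ^ n) d = E.phi d
  exact ⟨1, by rw [zpow_one]⟩

lemma phi_symm (d : G.Dart) : E.phi d.symm = E.ρ d := by
  show E.ρ (symmPerm G d.symm) = E.ρ d
  exact congrArg E.ρ (SimpleGraph.Dart.symm_symm d)

lemma face_symm_eq (d : G.Dart) : E.face d.symm = E.face (E.ρ d) := by
  rw [← phi_symm, face_phi]

lemma phi_fst (d : G.Dart) : (E.phi d).fst = d.snd := by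
  show (E.ρ (symmPerm G d)).fst = d.snd
  rw [E.fst_eq]
  rfl

variable {E}

lemma exists_dart (e : G.edgeSet) : ∃ d : G.Dart, d.edge = (e : Sym2 V) := by
  obtain ⟨e, he⟩ := e
  induction e with
  | _ a b => exact ⟨⟨(a, b), he⟩, rfl⟩

/-- a canonical dart of an edge -/
noncomputable def dartOf (e : G.edgeSet) : G.Dart := Classical.choose (exists_dart e)

lemma dartOf_edge (e : G.edgeSet) : (dartOf e).edge = (e : Sym2 V) :=
  Classical.choose_spec (exists_dart e)

lemma edge_eq_iff {e : G.edgeSet} (x : G.Dart) :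
    x.edge = (e : Sym2 V) ↔ x = dartOf e ∨ x = (dartOf e).symm := by
  rw [← dartOf_edge e, SimpleGraph.dart_edge_eq_iff]

lemma dartOf_ne_symm (e : G.edgeSet) : dartOf e ≠ (dartOf e).symm := by
  intro h
  have h2 : (dartOf e).fst = (dartOf e).snd := congrArg (fun x : G.Dart => x.fst) h
  exact (dartOf e).adj.ne h2

lemma mem_dart_edge_iff {v : V} (d : G.Dart) :
    v ∈ d.edge ↔ d.fst = v ∨ d.snd = v := by
  show v ∈ s(d.fst, d.snd) ↔ _
  constructor
  · rintro h
    rcases Sym2.mem_iff.1 h with h | h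
    · exact Or.inl h.symm
    · exact Or.inr h.symm
  · rintro (h | h)
    · exact Sym2.mem_iff.2 (Or.inl h.symm)
    · exact Sym2.mem_iff.2 (Or.inr h.symm)

end FaceBasics

section LinAlg

noncomputable instance facesFintype (E : RotSys G) : Fintype E.Faces := by
  classical
  exact Quotient.fintype _

variable (E : RotSys G)

/-- boundary map on edge chains over `ZMod 2` -/
noncomputable def bdry : (G.edgeSet → ZMod 2) →ₗ[ZMod 2] (V → ZMod 2) where
  toFun x v := ∑ e : G.edgeSet, if v ∈ (e : Sym2 V) then x e else 0
  map_add' x y := by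
    funext v
    simp only [Pi.add_apply, ← Finset.sum_add_distrib]
    exact Finset.sum_congr rfl fun e _ => by split <;> simp
  map_smul' c x := by
    funext v
    simp only [Pi.smul_apply, RingHom.id_apply, smul_eq_mul, Finset.mul_sum]
    exact Finset.sum_congr rfl fun e _ => by split <;> simp

/-- the face-boundary map over `ZMod 2` -/
noncomputable def faceMap : (E.Faces → ZMod 2) →ₗ[ZMod 2] (G.edgeSet → ZMod 2) where
  toFun s e := ∑ d : G.Dart, if d.edge = (e : Sym2 V) then s (E.face d) else 0
  map_add' x y := by
    funext e
    simp only [Pi.add_apply, ← Finset.sum_add_distrib]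
    exact Finset.sum_congr rfl fun d _ => by split <;> simp
  map_smul' c x := by
    funext e
    simp only [Pi.smul_apply, RingHom.id_apply, smul_eq_mul, Finset.mul_sum]
    exact Finset.sum_congr rfl fun d _ => by split <;> simp

lemma faceMap_apply (s : E.Faces → ZMod 2) (e : G.edgeSet) :
    faceMap E s e = s (E.face (dartOf e)) + s (E.face (dartOf e).symm) := by
  show (∑ d : G.Dart, if d.edge = (e : Sym2 V) then s (E.face d) else 0) = _
  have key : ∀ d : G.Dart, (if d.edge = (e : Sym2 V) then s (E.face d) else 0) =
      (if d = dartOf e then s (E.face (dartOf e)) else 0) +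
      (if d = (dartOf e).symm then s (E.face (dartOf e).symm) else 0) := by
    intro d
    by_cases h1 : d = dartOf e
    · subst h1
      rw [if_pos (dartOf_edge e), if_pos rfl, if_neg (dartOf_ne_symm e)]
      simp
    · by_cases h2 : d = (dartOf e).symm
      · subst h2
        rw [if_pos, if_neg h1, if_pos rfl, zero_add]
        rw [edge_eq_iff]
        exact Or.inr rfl
      · rw [if_neg, if_neg h1, if_neg h2, add_zero]
        rw [edge_eq_iff]
        tauto
  rw [Finset.sum_congr rfl fun d _ => key d, Finset.sum_add_distrib]
  simp

end LinAlg

end Stmt12Aux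

namespace Stmt12Aux

set_option linter.unusedSectionVars false
set_option maxHeartbeats 1000000

open SimpleGraph

variable {V : Type u} [Fintype V] [DecidableEq V] {G : SimpleGraph V} [DecidableRel G.Adj]

section Core

variable (E : RotSys G)

lemma zmod2_cases : ∀ a b : ZMod 2, a + b = 0 ↔ a = b := by decide

lemma bdry_faceMap_zero (s : E.Faces → ZMod 2) : (bdry : _ →ₗ[ZMod 2] _) (faceMap E s) = 0 := by
  funext v
  show (∑ e : G.edgeSet, if v ∈ (e : Sym2 V) then
      (∑ d : G.Dart, if d.edge = (e : Sym2 V) then s (E.face d) else 0) else 0) = 0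
  have step1 : ∀ e : G.edgeSet, (if v ∈ (e : Sym2 V) then
      (∑ d : G.Dart, if d.edge = (e : Sym2 V) then s (E.face d) else 0) else 0)
      = ∑ d : G.Dart, if v ∈ (e : Sym2 V) ∧ d.edge = (e : Sym2 V) then s (E.face d) else 0 := by
    intro e
    split
    · next h => exact Finset.sum_congr rfl fun d _ => by simp [h]
    · next h => exact (Finset.sum_eq_zero fun d _ => by simp [h]).symm
  rw [Finset.sum_congr rfl fun e _ => step1 e, Finset.sum_comm]
  have step2 : ∀ d : G.Dart,
      (∑ e : G.edgeSet, if v ∈ (e : Sym2 V) ∧ d.edge = (e : Sym2 V) then s (E.face d) else 0)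
      = if v ∈ d.edge then s (E.face d) else 0 := by
    intro d
    rw [Finset.sum_eq_single (⟨d.edge, d.edge_mem⟩ : G.edgeSet)]
    · simp
    · intro e _ hne
      rw [if_neg]
      rintro ⟨h1, h2⟩
      exact hne (by apply Subtype.ext; exact h2.symm)
    · intro h; exact absurd (Finset.mem_univ _) h
  rw [Finset.sum_congr rfl fun d _ => step2 d]
  have step3 : ∀ d : G.Dart, (if v ∈ d.edge then s (E.face d) else 0)
      = (if d.fst = v then s (E.face d) else 0) + (if d.snd = v then s (E.face d) else 0) := by
    intro d
    rcases Decidable.em (d.fst = v) with h1 | h1 <;> rcases Decidable.em (d.snd = v) with h2 | h2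
    · exact absurd (h1.trans h2.symm) d.adj.ne
    · rw [if_pos ((mem_dart_edge_iff d).2 (Or.inl h1)), if_pos h1, if_neg h2, add_zero]
    · rw [if_pos ((mem_dart_edge_iff d).2 (Or.inr h2)), if_neg h1, if_pos h2, zero_add]
    · rw [if_neg, if_neg h1, if_neg h2, add_zero]
      rw [mem_dart_edge_iff]; tauto
  rw [Finset.sum_congr rfl fun d _ => step3 d, Finset.sum_add_distrib]
  rw [← Finset.sum_filter, ← Finset.sum_filter]
  have bij : (∑ d ∈ Finset.univ.filter (fun d : G.Dart => d.snd = v), s (E.face d))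
      = ∑ d ∈ Finset.univ.filter (fun d : G.Dart => d.fst = v), s (E.face d) := by
    refine Finset.sum_nbij' (fun d => E.phi d) (fun d => E.phi⁻¹ d) ?_ ?_ ?_ ?_ ?_
    · intro d hd
      simp only [Finset.mem_filter, Finset.mem_univ, true_and] at hd ⊢
      rw [phi_fst]; exact hd
    · intro d hd
      simp only [Finset.mem_filter, Finset.mem_univ, true_and] at hd ⊢
      have := phi_fst E (E.phi⁻¹ d)
      rw [show E.phi (E.phi⁻¹ d) = d from E.phi.apply_symm_apply d] at this
      rw [← this]; exact hd
    · intro d _; simp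
    · intro d _; simp
    · intro d _
      rw [face_phi]
  rw [bij, zmod2_cases]

lemma faceMap_zero_at (s : E.Faces → ZMod 2) (d : G.Dart)
    (h : faceMap E s ⟨d.edge, d.edge_mem⟩ = 0) : s (E.face d) = s (E.face d.symm) := by
  set e : G.edgeSet := ⟨d.edge, d.edge_mem⟩ with he
  rw [faceMap_apply] at h
  rw [zmod2_cases] at h
  have hd : d.edge = (e : Sym2 V) := rfl
  rcases (edge_eq_iff d).1 hd with h1 | h1
  · rw [h1]; exact h
  · rw [h1]
    rw [SimpleGraph.Dart.symm_symm]
    exact h.symm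

lemma face_const (hconn : G.Connected) (s : E.Faces → ZMod 2)
    (hs : ∀ d : G.Dart, s (E.face d) = s (E.face d.symm)) :
    ∀ d d' : G.Dart, s (E.face d) = s (E.face d') := by
  have hρ : ∀ d : G.Dart, s (E.face (E.ρ d)) = s (E.face d) := by
    intro d
    rw [← face_symm_eq, ← hs]
  have hpow : ∀ (n : ℕ) (d : G.Dart), s (E.face ((E.ρ ^ n) d)) = s (E.face d) := by
    intro n
    induction n with
    | zero => intro d; rfl
    | succ n ih =>
      intro d
      have : (E.ρ ^ (n + 1)) d = (E.ρ ^ n) (E.ρ d) := by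
        rw [pow_succ]; rfl
      rw [this, ih, hρ]
  have htail : ∀ d d' : G.Dart, d.fst = d'.fst → s (E.face d) = s (E.face d') := by
    intro d d' hf
    obtain ⟨n, hn⟩ := E.cyclic d d' hf
    rw [← hn, hpow]
  have hwalk : ∀ {a b : V} (_ : G.Walk a b) (d d' : G.Dart),
      d.fst = a → d'.fst = b → s (E.face d) = s (E.face d') := by
    intro a b W
    induction W with
    | nil => intro d d' h1 h2; exact htail d d' (h1.trans h2.symm)
    | @cons a c b h p ih =>
      intro d d' h1 h2
      have hx : s (E.face d) = s (E.face (⟨(a, c), h⟩ : G.Dart)) := htail _ _ h1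
      rw [hx, hs]
      exact ih _ _ rfl h2
  intro d d'
  obtain ⟨W⟩ := hconn.preconnected d.fst d'.fst
  exact hwalk W d d' rfl rfl

lemma faceMap_one : faceMap E (fun _ => 1) = 0 := by
  funext e
  rw [faceMap_apply, Pi.zero_apply]
  decide

lemma ker_faceMap (hconn : G.Connected) (hne : G.edgeSet.Nonempty) :
    LinearMap.ker (faceMap E) = Submodule.span (ZMod 2) {(fun _ => 1 : E.Faces → ZMod 2)} := by
  apply le_antisymm
  · intro s hs
    rw [LinearMap.mem_ker] at hs
    have hsym : ∀ d : G.Dart, s (E.face d) = s (E.face d.symm) := by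
      intro d
      exact faceMap_zero_at E s d (by rw [hs]; rfl)
    obtain ⟨e0, he0⟩ := hne
    set d0 := dartOf (⟨e0, he0⟩ : G.edgeSet)
    have hconst := face_const E hconn s hsym
    rw [Submodule.mem_span_singleton]
    refine ⟨s (E.face d0), ?_⟩
    funext f
    induction f using Quotient.ind with
    | _ d =>
      show s (E.face d0) * 1 = s (Quotient.mk _ d)
      rw [mul_one]
      exact hconst d0 d
  · rw [Submodule.span_le, Set.singleton_subset_iff]
    exact faceMap_one E

end Core

end Stmt12Aux

namespace Stmt12Aux

set_option linter.unusedSectionVars false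
set_option maxHeartbeats 1000000

open SimpleGraph

variable {V : Type u} [Fintype V] [DecidableEq V] {G : SimpleGraph V} [DecidableRel G.Adj]

section Rank

/-- edge chain (mod 2) of a walk -/
noncomputable def pathVec : ∀ {a b : V}, G.Walk a b → (G.edgeSet → ZMod 2)
  | _, _, SimpleGraph.Walk.nil => 0
  | _, _, @SimpleGraph.Walk.cons _ _ a c _ h p =>
      (fun e : G.edgeSet => if (e : Sym2 V) = s(a, c) then (1 : ZMod 2) else 0) + pathVec p

lemma pathVec_nil {a : V} : pathVec (SimpleGraph.Walk.nil : G.Walk a a) = 0 := rfl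

lemma pathVec_cons {a c b : V} (h : G.Adj a c) (p : G.Walk c b) :
    pathVec (SimpleGraph.Walk.cons h p)
      = (fun e : G.edgeSet => if (e : Sym2 V) = s(a, c) then (1 : ZMod 2) else 0) + pathVec p := rfl

lemma zmod2_mid : ∀ x y z : ZMod 2, (x + z) + (z + y) = x + y := by decide

lemma bdry_single (a c : V) (h : G.Adj a c) (v : V) :
    (bdry : _ →ₗ[ZMod 2] _) (fun e : G.edgeSet => if (e : Sym2 V) = s(a, c) then 1 else 0) v
      = (if v = a then 1 else 0) + (if v = c then 1 else 0) := by
  show (∑ e : G.edgeSet, if v ∈ (e : Sym2 V) then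
      (if (e : Sym2 V) = s(a, c) then (1 : ZMod 2) else 0) else 0) = _
  rw [Finset.sum_eq_single (⟨s(a, c), h⟩ : G.edgeSet)]
  · have hac : a ≠ c := h.ne
    rcases Decidable.em (v = a) with h1 | h1 <;> rcases Decidable.em (v = c) with h2 | h2
    · exact absurd (h1.symm.trans h2) hac
    · subst h1; simp [h2]
    · subst h2; simp [h1]
    · rw [if_neg, if_neg h1, if_neg h2, add_zero]
      rw [Sym2.mem_iff]; tauto
  · intro e _ hne
    rcases Decidable.em (v ∈ (e : Sym2 V)) with h1 | h1
    · rw [if_pos h1, if_neg]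
      intro hh
      exact hne (Subtype.ext hh)
    · rw [if_neg h1]
  · intro h'; exact absurd (Finset.mem_univ _) h'

lemma bdry_pathVec {a b : V} (W : G.Walk a b) (v : V) :
    (bdry : _ →ₗ[ZMod 2] _) (pathVec W) v
      = (if v = a then 1 else 0) + (if v = b then 1 else 0) := by
  induction W with
  | nil =>
    rw [pathVec_nil, map_zero]
    have : ∀ x : ZMod 2, (0 : ZMod 2) = x + x := by decide
    exact this _
  | @cons a c b h p ih =>
    rw [pathVec_cons, map_add, Pi.add_apply, ih, bdry_single a c h v]
    exact zmod2_mid _ _ _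

lemma card_filter_incidence (v : V) :
    (Finset.univ.filter (fun e : G.edgeSet => v ∈ (e : Sym2 V))).card = G.degree v := by
  rw [← Fintype.card_subtype]
  rw [← SimpleGraph.card_incidenceSet_eq_degree G v]
  apply Fintype.card_congr
  exact (Equiv.subtypeSubtypeEquivSubtypeInter (· ∈ G.edgeSet) (v ∈ ·))

lemma one_mem_ker_bdry (heul : ∀ v : V, Even (G.degree v)) :
    (fun _ => 1 : G.edgeSet → ZMod 2) ∈ LinearMap.ker (bdry : _ →ₗ[ZMod 2] (V → ZMod 2)) := by
  rw [LinearMap.mem_ker]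
  funext v
  show (∑ e : G.edgeSet, if v ∈ (e : Sym2 V) then (1 : ZMod 2) else 0) = (0 : V → ZMod 2) v
  rw [Finset.sum_boole, card_filter_incidence, Pi.zero_apply]
  rw [ZMod.natCast_eq_zero_iff]
  exact (heul v).two_dvd

lemma card_le_rank_bdry (hconn : G.Connected) (r : V) :
    Fintype.card V - 1 ≤ Module.finrank (ZMod 2)
      ↥(LinearMap.range (bdry : (G.edgeSet → ZMod 2) →ₗ[ZMod 2] (V → ZMod 2))) := by
  classical
  set B := LinearMap.range (bdry : (G.edgeSet → ZMod 2) →ₗ[ZMod 2] (V → ZMod 2)) with hB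
  have hmem : ∀ u : V, (Pi.single r 1 + Pi.single u 1 : V → ZMod 2) ∈ B := by
    intro u
    obtain ⟨W⟩ := hconn.preconnected r u
    refine ⟨pathVec W, ?_⟩
    funext v
    rw [bdry_pathVec W v]
    simp [Pi.single_apply]
  set F : {u : V // u ≠ r} → (V → ZMod 2) := fun u => Pi.single r 1 + Pi.single u.1 1 with hF
  have hind : LinearIndependent (ZMod 2) F := by
    rw [Fintype.linearIndependent_iff]
    intro g hg u0
    have h0 := congrFun hg u0.1
    rw [Finset.sum_apply] at h0
    have hterm : ∀ u : {u : V // u ≠ r},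
        (g u • F u) u0.1 = if u = u0 then g u0 else 0 := by
      intro u
      rw [hF]
      simp only [Pi.smul_apply, Pi.add_apply, Pi.single_apply, smul_eq_mul]
      rw [if_neg u0.2, zero_add]
      by_cases h : u = u0
      · subst h; simp
      · rw [if_neg (fun hh => h (Subtype.ext hh.symm)), if_neg h, mul_zero]
    rw [Finset.sum_congr rfl fun u _ => hterm u] at h0
    rw [Finset.sum_ite_eq' Finset.univ u0 (fun _ => g u0)] at h0
    rw [if_pos (Finset.mem_univ _)] at h0
    exact h0
  have hind2 : LinearIndependent (ZMod 2) (fun u : {u : V // u ≠ r} => (⟨F u, hmem u.1⟩ : B)) := by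
    apply LinearIndependent.of_comp B.subtype
    exact hind
  have hcard := hind2.fintype_card_le_finrank
  have : Fintype.card {u : V // u ≠ r} = Fintype.card V - 1 := by
    rw [Fintype.card_subtype_compl, Fintype.card_subtype_eq]
  omega

variable (E : RotSys G)

lemma range_faceMap (hconn : G.Connected) (hne : G.edgeSet.Nonempty) (hpl : E.IsPlanar) :
    LinearMap.range (faceMap E)
      = LinearMap.ker (bdry : (G.edgeSet → ZMod 2) →ₗ[ZMod 2] (V → ZMod 2)) := by
  have hle : LinearMap.range (faceMap E)
      ≤ LinearMap.ker (bdry : (G.edgeSet → ZMod 2) →ₗ[ZMod 2] (V → ZMod 2)) := by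
    rintro _ ⟨s, rfl⟩
    exact LinearMap.mem_ker.2 (bdry_faceMap_zero E s)
  refine (Submodule.eq_of_le_of_finrank_le hle ?_)
  have hd0 : Nonempty E.Faces := ⟨E.face (dartOf ⟨hne.choose, hne.choose_spec⟩)⟩
  have h1 := LinearMap.finrank_range_add_finrank_ker (faceMap E)
  rw [Module.finrank_pi] at h1
  obtain ⟨f0⟩ := hd0
  have hone : (fun _ => 1 : E.Faces → ZMod 2) ≠ 0 := by
    intro h
    have := congrFun h f0
    rw [Pi.zero_apply] at this
    exact one_ne_zero this
  have hker1 : Module.finrank (ZMod 2) ↥(LinearMap.ker (faceMap E)) = 1 := by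
    rw [ker_faceMap E hconn hne]
    exact finrank_span_singleton hone
  rw [hker1] at h1
  have h2 := LinearMap.finrank_range_add_finrank_ker
    (bdry : (G.edgeSet → ZMod 2) →ₗ[ZMod 2] (V → ZMod 2))
  rw [Module.finrank_pi] at h2
  have h3 := card_le_rank_bdry hconn (dartOf ⟨hne.choose, hne.choose_spec⟩).fst
  have hnV : Nonempty V := ⟨(dartOf (⟨hne.choose, hne.choose_spec⟩ : G.edgeSet)).fst⟩
  have hV1 : 1 ≤ Fintype.card V := Fintype.card_pos_iff.2 hnV
  have hpl' : Fintype.card V + Fintype.card E.Faces = Fintype.card G.edgeSet + 2 := by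
    have := hpl
    rw [RotSys.IsPlanar] at this
    rwa [Nat.card_eq_fintype_card, Nat.card_eq_fintype_card, Nat.card_eq_fintype_card] at this
  omega

lemma face_ne_symm (hconn : G.Connected) (hne : G.edgeSet.Nonempty) (hpl : E.IsPlanar)
    (heul : ∀ v : V, Even (G.degree v)) (d : G.Dart) : E.face d ≠ E.face d.symm := by
  intro hface
  have h1 := one_mem_ker_bdry heul
  rw [← range_faceMap E hconn hne hpl] at h1
  obtain ⟨s, hs⟩ := h1
  have hval := congrFun hs (⟨d.edge, d.edge_mem⟩ : G.edgeSet)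
  rw [faceMap_apply] at hval
  set D := dartOf (⟨d.edge, d.edge_mem⟩ : G.edgeSet) with hDdef
  have hfd : E.face D = E.face D.symm := by
    rcases (edge_eq_iff (e := (⟨d.edge, d.edge_mem⟩ : G.edgeSet)) d).1 rfl with h | h
    · rw [← hDdef] at h
      rw [← h]; exact hface
    · rw [← hDdef] at h
      have h2 : D = d.symm := by rw [h, SimpleGraph.Dart.symm_symm]
      rw [h2, SimpleGraph.Dart.symm_symm]
      exact hface.symm
  rw [← hfd] at hval
  have : ∀ x : ZMod 2, x + x ≠ 1 := by decide
  exact this _ hval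

end Rank

section Parent

lemma exists_parent (hconn : G.Connected) (r : V) (v : V) (h : v ≠ r) :
    ∃ u, G.Adj v u ∧ G.dist u r + 1 = G.dist v r := by
  have hpos : 0 < G.dist v r := hconn.pos_dist_of_ne h
  obtain ⟨W, hW⟩ := hconn.exists_walk_length_eq_dist v r
  cases W with
  | nil => rw [SimpleGraph.Walk.length_nil] at hW; omega
  | @cons _ u _ hadj p =>
    refine ⟨u, hadj, ?_⟩
    rw [SimpleGraph.Walk.length_cons] at hW
    have hA : G.dist u r ≤ p.length := SimpleGraph.dist_le p
    have hC : G.dist v r ≤ G.dist v u + G.dist u r := hconn.dist_triangle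
    have hD : G.dist v u ≤ 1 := by
      have := SimpleGraph.dist_le (SimpleGraph.Walk.cons hadj SimpleGraph.Walk.nil)
      simpa using this
    omega

/-- parent of a vertex in a BFS tree towards `r` -/
noncomputable def par (hconn : G.Connected) (r : V) (v : V) : V :=
  if h : v = r then v else (exists_parent hconn r v h).choose

lemma par_adj (hconn : G.Connected) (r : V) (v : V) (h : v ≠ r) :
    G.Adj v (par hconn r v) := by
  rw [par, dif_neg h]
  exact (exists_parent hconn r v h).choose_spec.1

lemma par_dist (hconn : G.Connected) (r : V) (v : V) (h : v ≠ r) :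
    G.dist (par hconn r v) r + 1 = G.dist v r := by
  rw [par, dif_neg h]
  exact (exists_parent hconn r v h).choose_spec.2

/-- tree edges -/
def TEp (hconn : G.Connected) (r : V) (e : G.edgeSet) : Prop :=
  ∃ v, v ≠ r ∧ (e : Sym2 V) = s(v, par hconn r v)

lemma forest_zero (hconn : G.Connected) (r : V) (x : G.edgeSet → ZMod 2)
    (hker : (bdry : _ →ₗ[ZMod 2] _) x = 0)
    (hsupp : ∀ e, x e ≠ 0 → TEp hconn r e) : x = 0 := by
  by_contra hx
  have hSne : ∃ v : V, v ≠ r ∧ ∃ (he : s(v, par hconn r v) ∈ G.edgeSet),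
      x ⟨s(v, par hconn r v), he⟩ ≠ 0 := by
    have : ∃ e, x e ≠ 0 := by
      by_contra hall
      push_neg at hall
      exact hx (funext fun e => hall e)
    obtain ⟨e, he⟩ := this
    obtain ⟨v, hv, hve⟩ := hsupp e he
    refine ⟨v, hv, by rw [← hve]; exact e.2, ?_⟩
    have : e = ⟨s(v, par hconn r v), by rw [← hve]; exact e.2⟩ := Subtype.ext hve
    rwa [← this]
  classical
  set S : Finset V := Finset.univ.filter (fun v => v ≠ r ∧ ∃ (he : s(v, par hconn r v) ∈ G.edgeSet),
      x ⟨s(v, par hconn r v), he⟩ ≠ 0) with hSdef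
  have hSne' : S.Nonempty := by
    obtain ⟨v, h1, h2⟩ := hSne
    exact ⟨v, Finset.mem_filter.2 ⟨Finset.mem_univ _, h1, h2⟩⟩
  obtain ⟨v0, hv0S, hv0max⟩ := Finset.exists_max_image S (fun v => G.dist v r) hSne'
  rw [hSdef, Finset.mem_filter] at hv0S
  obtain ⟨-, hv0r, hmem0, hx0⟩ := hv0S
  have hcon := congrFun hker v0
  rw [Pi.zero_apply] at hcon
  have hsum : (∑ e : G.edgeSet, if v0 ∈ (e : Sym2 V) then x e else 0)
      = x ⟨s(v0, par hconn r v0), hmem0⟩ := by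
    rw [Finset.sum_eq_single (⟨s(v0, par hconn r v0), hmem0⟩ : G.edgeSet)]
    · rw [if_pos]
      exact Sym2.mem_mk_left _ _
    · intro e _ hne
      rcases Decidable.em (x e = 0) with hxe | hxe
      · split <;> [exact hxe; rfl]
      · rw [if_neg]
        obtain ⟨u, hur, hue⟩ := hsupp e hxe
        intro hv0e
        rw [hue] at hv0e
        rcases Sym2.mem_iff.1 hv0e with h | h
        · subst h
          exact hne (Subtype.ext hue)
        · -- v0 = par u, u in S with bigger dist
          have huS : u ∈ S := by
            rw [hSdef, Finset.mem_filter]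
            refine ⟨Finset.mem_univ _, hur, by rw [← hue]; exact e.2, ?_⟩
            have : e = ⟨s(u, par hconn r u), by rw [← hue]; exact e.2⟩ := Subtype.ext hue
            rwa [← this]
          have hle := hv0max u huS
          have := par_dist hconn r u hur
          rw [← h] at this
          omega
    · intro h'; exact absurd (Finset.mem_univ _) h'
  show False
  apply hx0
  rw [← hsum]
  exact hcon

variable (E : RotSys G)

lemma closed_faces (hconn : G.Connected) (r : V) (hne : G.edgeSet.Nonempty) (S : Set E.Faces)
    (hcl : ∀ d : G.Dart, ¬ TEp hconn r (⟨d.edge, d.edge_mem⟩ : G.edgeSet) →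
      (E.face d ∈ S ↔ E.face d.symm ∈ S)) :
    S = ∅ ∨ S = Set.univ := by
  classical
  set s : E.Faces → ZMod 2 := fun f => if f ∈ S then 1 else 0 with hsdef
  have hx : faceMap E s = 0 := by
    apply forest_zero hconn r
    · exact bdry_faceMap_zero E s
    · intro e hxe
      by_contra hTE
      apply hxe
      have hcl' := hcl (dartOf e)
      have heq : (⟨(dartOf e).edge, (dartOf e).edge_mem⟩ : G.edgeSet) = e :=
        Subtype.ext (dartOf_edge e)
      rw [heq] at hcl'
      have hcl2 := hcl' hTE
      refine (faceMap_apply E s e).trans ?_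
      rw [zmod2_cases]
      by_cases hmem : E.face (dartOf e) ∈ S
      · have h2 : E.face (dartOf e).symm ∈ S := hcl2.1 hmem
        simp [hsdef, hmem, h2]
      · have h2 : E.face (dartOf e).symm ∉ S := fun hc => hmem (hcl2.2 hc)
        simp [hsdef, hmem, h2]
  have hsym : ∀ d : G.Dart, s (E.face d) = s (E.face d.symm) :=
    fun d => faceMap_zero_at E s d (by rw [hx]; rfl)
  have hconst := face_const E hconn s hsym
  obtain ⟨e0m, he0⟩ := hne
  have kconst : ∀ d : G.Dart,
      (E.face d ∈ S ↔ E.face (dartOf (⟨e0m, he0⟩ : G.edgeSet)) ∈ S) := by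
    intro d
    have h := hconst (dartOf (⟨e0m, he0⟩ : G.edgeSet)) d
    by_cases h1 : E.face (dartOf (⟨e0m, he0⟩ : G.edgeSet)) ∈ S <;>
      by_cases h2 : E.face d ∈ S
    · exact ⟨fun _ => h1, fun _ => h2⟩
    · rw [hsdef] at h
      simp only [if_pos h1, if_neg h2] at h
      exact absurd h one_ne_zero
    · rw [hsdef] at h
      simp only [if_neg h1, if_pos h2] at h
      exact absurd h.symm one_ne_zero
    · exact ⟨fun hh => absurd hh h2, fun hh => absurd hh h1⟩
  by_cases h0 : E.face (dartOf (⟨e0m, he0⟩ : G.edgeSet)) ∈ S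
  · right
    ext f
    simp only [Set.mem_univ, iff_true]
    induction f using Quotient.ind with
    | _ d => exact (kconst d).2 h0
  · left
    ext f
    simp only [Set.mem_empty_iff_false, iff_false]
    induction f using Quotient.ind with
    | _ d => exact fun hc => h0 ((kconst d).1 hc)

end Parent

end Stmt12Aux

namespace Stmt12Aux

set_option linter.unusedSectionVars false
set_option maxHeartbeats 1000000

open SimpleGraph

variable {V : Type u} [Fintype V] [DecidableEq V] {G : SimpleGraph V} [DecidableRel G.Adj]

section Dual

variable (E : RotSys G)

/-- incidence of an edge and a face -/
def incid (e : G.edgeSet) (f : E.Faces) : Prop :=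
  ∃ d : G.Dart, d.edge = (e : Sym2 V) ∧ E.face d = f

lemma incid_iff (e : G.edgeSet) (f : E.Faces) :
    incid E e f ↔ f = E.face (dartOf e) ∨ f = E.face (dartOf e).symm := by
  constructor
  · rintro ⟨d, hd, rfl⟩
    rcases (edge_eq_iff d).1 hd with h | h
    · exact Or.inl (by rw [h])
    · exact Or.inr (by rw [h])
  · rintro (rfl | rfl)
    · exact ⟨dartOf e, dartOf_edge e, rfl⟩
    · exact ⟨(dartOf e).symm, ((dartOf e).edge_symm).trans (dartOf_edge e), rfl⟩

lemma incid_dart (d : G.Dart) (f : E.Faces) :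
    incid E (⟨d.edge, d.edge_mem⟩ : G.edgeSet) f ↔ f = E.face d ∨ f = E.face d.symm := by
  constructor
  · rintro ⟨x, hx, rfl⟩
    rcases (SimpleGraph.dart_edge_eq_iff x d).1 hx with h | h
    · exact Or.inl (by rw [h])
    · exact Or.inr (by rw [h])
  · rintro (rfl | rfl)
    · exact ⟨d, rfl, rfl⟩
    · exact ⟨d.symm, d.edge_symm, rfl⟩

lemma incid_dart_self (d : G.Dart) : incid E (⟨d.edge, d.edge_mem⟩ : G.edgeSet) (E.face d) :=
  ⟨d, rfl, rfl⟩

/-- the dual graph along non-tree edges -/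
def Hgraph (hconn : G.Connected) (r : V) : SimpleGraph E.Faces where
  Adj f g := f ≠ g ∧ ∃ e : G.edgeSet, ¬ TEp hconn r e ∧ incid E e f ∧ incid E e g
  symm := by
    constructor
    rintro f g ⟨hne, e, h1, h2, h3⟩
    exact ⟨hne.symm, e, h1, h3, h2⟩
  loopless := ⟨fun f h => h.1 rfl⟩

lemma Hgraph_adj (hconn : G.Connected) (r : V) (f g : E.Faces) :
    (Hgraph E hconn r).Adj f g ↔
      (f ≠ g ∧ ∃ e : G.edgeSet, ¬ TEp hconn r e ∧ incid E e f ∧ incid E e g) := Iff.rfl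

lemma H_conn (hconn : G.Connected) (r : V) (hne : G.edgeSet.Nonempty) :
    (Hgraph E hconn r).Connected := by
  rw [SimpleGraph.connected_iff]
  refine ⟨?_, ⟨E.face (dartOf ⟨hne.choose, hne.choose_spec⟩)⟩⟩
  intro f g
  set S : Set E.Faces := {h | (Hgraph E hconn r).Reachable f h} with hS
  have hcl : ∀ d : G.Dart, ¬ TEp hconn r (⟨d.edge, d.edge_mem⟩ : G.edgeSet) →
      (E.face d ∈ S ↔ E.face d.symm ∈ S) := by
    intro d hTE
    by_cases heq : E.face d = E.face d.symm
    · rw [heq]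
    · have hadj : (Hgraph E hconn r).Adj (E.face d) (E.face d.symm) :=
        (Hgraph_adj E hconn r _ _).2 ⟨heq, ⟨d.edge, d.edge_mem⟩, hTE, incid_dart_self E d,
          ⟨d.symm, d.edge_symm, rfl⟩⟩
      constructor
      · intro hf
        exact hf.trans hadj.reachable
      · intro hf
        exact hf.trans hadj.symm.reachable
  rcases closed_faces E hconn r hne S hcl with h | h
  · exfalso
    have : f ∈ S := SimpleGraph.Reachable.refl f
    rw [h] at this
    exact this
  · have : g ∈ S := by rw [h]; trivial
    exact this

/-- the tree-edge bijection -/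
noncomputable def teMap (hconn : G.Connected) (r : V) (v : {v : V // v ≠ r}) :
    {e : G.edgeSet // TEp hconn r e} :=
  ⟨⟨s(v.1, par hconn r v.1), (G.mem_edgeSet).2 (par_adj hconn r v.1 v.2)⟩,
    ⟨v.1, v.2, rfl⟩⟩

lemma teMap_bijective (hconn : G.Connected) (r : V) :
    Function.Bijective (teMap hconn r) := by
  constructor
  · rintro ⟨v, hv⟩ ⟨u, hu⟩ h
    have h2 : s(v, par hconn r v) = s(u, par hconn r u) := congrArg (fun x => (x.1 : Sym2 V)) h
    rcases Sym2.eq_iff.1 h2 with ⟨h3, h4⟩ | ⟨h3, h4⟩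
    · exact Subtype.ext h3
    · exfalso
      have d1 := par_dist hconn r v hv
      have d2 := par_dist hconn r u hu
      rw [← h3] at d2
      rw [h4] at d1
      omega
  · rintro ⟨e, v, hv, hve⟩
    exact ⟨⟨v, hv⟩, Subtype.ext (Subtype.ext hve.symm)⟩

lemma card_TE (hconn : G.Connected) (r : V) :
    Fintype.card {e : G.edgeSet // TEp hconn r e} = Fintype.card V - 1 := by
  classical
  rw [← Fintype.card_of_bijective (teMap_bijective hconn r)]
  rw [Fintype.card_subtype_compl, Fintype.card_subtype_eq]

lemma card_NT (hconn : G.Connected) (r : V) :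
    Fintype.card {e : G.edgeSet // ¬ TEp hconn r e}
      = Fintype.card G.edgeSet - (Fintype.card V - 1) := by
  classical
  rw [Fintype.card_subtype_compl, card_TE hconn r]

end Dual

end Stmt12Aux

namespace Stmt12Aux

set_option linter.unusedSectionVars false
set_option maxHeartbeats 1000000

open SimpleGraph

variable {V : Type u} [Fintype V] [DecidableEq V] {G : SimpleGraph V} [DecidableRel G.Adj]

section Poset

variable (E : RotSys G)

/-- abbreviation for the strict relation of the face poset -/
abbrev FPlt : (V ⊕ G.edgeSet ⊕ E.Faces) → (V ⊕ G.edgeSet ⊕ E.Faces) → Prop :=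
  TriLt (fun (v : V) (e : G.edgeSet) => v ∈ (e : Sym2 V))
    (fun (e : G.edgeSet) (f : E.Faces) => ∃ d : G.Dart, d.edge = (e : Sym2 V) ∧ E.face d = f)

lemma fp_lt_iff (x y : V ⊕ G.edgeSet ⊕ E.Faces) :
    letI := facePosetOrder G E
    x < y ↔ FPlt E x y := by
  letI := facePosetOrder G E
  constructor
  · rintro ⟨h1 | h1, h2⟩
    · exact absurd (Or.inl h1.symm) h2
    · exact h1
  · intro h
    refine ⟨Or.inr h, ?_⟩
    rintro (h' | h')
    · subst h'; cases h
    · cases h <;> cases h'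

lemma fp_covBy_ve (v : V) (e : G.edgeSet) :
    letI := facePosetOrder G E
    (Sum.inl v : V ⊕ G.edgeSet ⊕ E.Faces) ⋖ Sum.inr (Sum.inl e) ↔ v ∈ (e : Sym2 V) := by
  letI := facePosetOrder G E
  constructor
  · intro h
    have := (fp_lt_iff E _ _).1 h.1
    cases this with
    | ab h' => exact h'
  · intro h
    constructor
    · exact (fp_lt_iff E _ _).2 (TriLt.ab h)
    · intro c hc1 hc2
      have h1 := (fp_lt_iff E _ _).1 hc1
      have h2 := (fp_lt_iff E _ _).1 hc2
      cases h1 <;> cases h2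

lemma fp_covBy_ef (e : G.edgeSet) (f : E.Faces) :
    letI := facePosetOrder G E
    (Sum.inr (Sum.inl e) : V ⊕ G.edgeSet ⊕ E.Faces) ⋖ Sum.inr (Sum.inr f) ↔ incid E e f := by
  letI := facePosetOrder G E
  constructor
  · intro h
    have := (fp_lt_iff E _ _).1 h.1
    cases this with
    | bc h' => exact h'
  · intro h
    constructor
    · exact (fp_lt_iff E _ _).2 (TriLt.bc h)
    · intro c hc1 hc2
      have h1 := (fp_lt_iff E _ _).1 hc1
      have h2 := (fp_lt_iff E _ _).1 hc2
      cases h1 <;> cases h2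

lemma fp_covers_vertex (v : V) (y : V ⊕ G.edgeSet ⊕ E.Faces) :
    letI := facePosetOrder G E
    (Sum.inl v : V ⊕ G.edgeSet ⊕ E.Faces) ⋖ y
      ↔ ∃ e : G.edgeSet, y = Sum.inr (Sum.inl e) ∧ v ∈ (e : Sym2 V) := by
  letI := facePosetOrder G E
  constructor
  · intro h
    have h1 := (fp_lt_iff E _ _).1 h.1
    cases h1 with
    | ab h' => exact ⟨_, rfl, h'⟩
    | @ac a b c h1 h2 =>
      exfalso
      exact h.2 ((fp_lt_iff E _ _).2 (TriLt.ab h1)) ((fp_lt_iff E _ _).2 (TriLt.bc h2))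
  · rintro ⟨e, rfl, he⟩
    exact (fp_covBy_ve E v e).2 he

lemma fp_covers_edge (e : G.edgeSet) (y : V ⊕ G.edgeSet ⊕ E.Faces) :
    letI := facePosetOrder G E
    (Sum.inr (Sum.inl e) : V ⊕ G.edgeSet ⊕ E.Faces) ⋖ y
      ↔ ∃ f : E.Faces, y = Sum.inr (Sum.inr f) ∧ incid E e f := by
  letI := facePosetOrder G E
  constructor
  · intro h
    have h1 := (fp_lt_iff E _ _).1 h.1
    cases h1 with
    | bc h' => exact ⟨_, rfl, h'⟩
  · rintro ⟨f, rfl, hf⟩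
    exact (fp_covBy_ef E e f).2 hf

/-- the rank structure -/
noncomputable def fpRank : @RankStruct (V ⊕ G.edgeSet ⊕ E.Faces) (facePosetOrder G E) :=
  letI := facePosetOrder G E
  { rk := triRk
    strict_mono := by
      intro x y h
      have h1 := (fp_lt_iff E _ _).1 h
      cases h1 <;> simp [triRk]
    rk_covBy := by
      intro x y h
      have h1 := (fp_lt_iff E _ _).1 h.1
      cases h1 with
      | ab h' => simp [triRk]
      | bc h' => simp [triRk]
      | @ac a b c h2 h3 =>
        exfalso
        exact h.2 ((fp_lt_iff E _ _).2 (TriLt.ab h2)) ((fp_lt_iff E _ _).2 (TriLt.bc h3)) }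

end Poset

section Counting

variable (E : RotSys G)

/-- the dart out of `v` along an edge containing `v` -/
noncomputable def dartAt (v : V) (e : G.edgeSet) (h : v ∈ (e : Sym2 V)) : G.Dart :=
  ⟨(v, Sym2.Mem.other' h), by
    rw [← G.mem_edgeSet]
    have := Sym2.other_spec' h
    rw [this]
    exact e.2⟩

lemma dartAt_fst (v : V) (e : G.edgeSet) (h : v ∈ (e : Sym2 V)) : (dartAt v e h).fst = v := rfl

lemma dartAt_edge (v : V) (e : G.edgeSet) (h : v ∈ (e : Sym2 V)) :
    (dartAt v e h).edge = (e : Sym2 V) := Sym2.other_spec' h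

lemma even_card_mid (hconn : G.Connected) (hne : G.edgeSet.Nonempty) (hpl : E.IsPlanar)
    (heul : ∀ v : V, Even (G.degree v)) (v : V) (f : E.Faces) :
    Even (Nat.card {e : G.edgeSet // v ∈ (e : Sym2 V) ∧ incid E e f}) := by
  classical
  have hΦ : Function.Bijective
      (fun x : {e : G.edgeSet // v ∈ (e : Sym2 V) ∧ incid E e f} =>
        (⟨dartAt v x.1 x.2.1, dartAt_fst v x.1 x.2.1, by
          have h3 := (incid_dart E (dartAt v x.1 x.2.1) f)
          have h4 : (⟨(dartAt v x.1 x.2.1).edge, (dartAt v x.1 x.2.1).edge_mem⟩ : G.edgeSet)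
              = x.1 := Subtype.ext (dartAt_edge v x.1 x.2.1)
          rw [h4] at h3
          exact h3.1 x.2.2⟩ :
          {d : G.Dart // d.fst = v ∧ (f = E.face d ∨ f = E.face d.symm)})) := by
    constructor
    · rintro x y hxy
      apply Subtype.ext
      apply Subtype.ext
      have h1 : (dartAt v x.1 x.2.1).edge = (dartAt v y.1 y.2.1).edge := by
        rw [Subtype.mk_eq_mk] at hxy
        rw [hxy]
      rw [dartAt_edge, dartAt_edge] at h1
      exact h1
    · rintro ⟨d, hd1, hd2⟩
      have hmem : v ∈ ((⟨d.edge, d.edge_mem⟩ : G.edgeSet) : Sym2 V) := by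
        rw [mem_dart_edge_iff]
        exact Or.inl hd1
      refine ⟨⟨⟨d.edge, d.edge_mem⟩, hmem, ?_⟩, ?_⟩
      · exact (incid_dart E d f).2 hd2
      · apply Subtype.ext
        have he : (dartAt v ⟨d.edge, d.edge_mem⟩ hmem).edge = d.edge :=
          dartAt_edge v _ _
        rcases (SimpleGraph.dart_edge_eq_iff _ d).1 he with h | h
        · exact h
        · exfalso
          have hf2 : (dartAt v ⟨d.edge, d.edge_mem⟩ hmem).fst = d.snd := by
            rw [h]; rfl
          rw [dartAt_fst] at hf2
          exact d.adj.ne (hd1.trans hf2)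
  rw [Nat.card_congr (Equiv.ofBijective _ hΦ)]
  have hsplit : ∀ d : G.Dart,
      (d.fst = v ∧ (f = E.face d ∨ f = E.face d.symm)) ↔
      ((d.fst = v ∧ f = E.face d) ∨ (d.fst = v ∧ f = E.face d.symm)) := by
    intro d; tauto
  rw [Nat.card_congr (Equiv.subtypeEquivRight hsplit)]
  have hdisj : ∀ d : G.Dart, ¬((d.fst = v ∧ f = E.face d) ∧ (d.fst = v ∧ f = E.face d.symm)) := by
    rintro d ⟨⟨-, h1⟩, ⟨-, h2⟩⟩
    exact face_ne_symm E hconn hne hpl heul d (h1.symm.trans h2)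
  rw [Nat.card_congr (subtypeOrEquiv _ _ (by
    intro r hrp hrq d hd
    exact absurd ⟨hrp d hd, hrq d hd⟩ (hdisj d)))]
  rw [Nat.card_sum]
  have hbij : Nat.card {d : G.Dart // d.fst = v ∧ f = E.face d.symm}
      = Nat.card {d : G.Dart // d.fst = v ∧ f = E.face d} := by
    apply Nat.card_congr
    refine Equiv.subtypeEquiv E.ρ ?_
    intro d
    constructor
    · rintro ⟨h1, h2⟩
      refine ⟨?_, ?_⟩
      · show (E.ρ d).fst = v
        rw [E.fst_eq]; exact h1
      · show f = E.face (E.ρ d)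
        rw [← face_symm_eq]; exact h2
    · rintro ⟨h1, h2⟩
      refine ⟨?_, ?_⟩
      · have : (E.ρ d).fst = d.fst := E.fst_eq d
        rw [← this]; exact h1
      · rw [face_symm_eq]; exact h2
  rw [hbij]
  exact ⟨_, rfl⟩

end Counting

end Stmt12Aux
theorem stmt12 {V : Type u} [Fintype V] [DecidableEq V] (G : SimpleGraph V)
    [DecidableRel G.Adj] (hconn : G.Connected) (hne : G.edgeSet.Nonempty)
    (heul : ∀ v : V, Even (G.degree v))
    (E : RotSys G) (hpl : E.IsPlanar) :
    letI : PartialOrder (V ⊕ G.edgeSet ⊕ E.Faces) := facePosetOrder G E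
    ∃ R : RankStruct (V ⊕ G.edgeSet ⊕ E.Faces),
      R.rk = triRk ∧ SphereLike R 2 ∧
        ∀ v : V, Even {y : V ⊕ G.edgeSet ⊕ E.Faces | Sum.inl v ⋖ y}.ncard := by
  letI : PartialOrder (V ⊕ G.edgeSet ⊕ E.Faces) := facePosetOrder G E
  classical
  open Stmt12Aux in
  refine ⟨fpRank E, rfl, ?_, ?_⟩
  · -- SphereLike
    open Stmt12Aux in
    obtain ⟨em0, hem0⟩ := id hne
    have hne' : G.edgeSet.Nonempty := ⟨em0, hem0⟩
    set r : V := (dartOf (⟨em0, hem0⟩ : G.edgeSet)).fst with hrdef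
    set f0 : E.Faces := E.face (dartOf (⟨em0, hem0⟩ : G.edgeSet)) with hf0def
    haveI : DecidableEq E.Faces := Classical.decEq _
    set HG : SimpleGraph E.Faces := Hgraph E hconn r with hHGdef
    haveI : DecidableRel HG.Adj := Classical.decRel _
    have Hc : HG.Connected := H_conn E hconn r hne'
    have hqadj : ∀ g : E.Faces, g ≠ f0 → HG.Adj g (par Hc f0 g) :=
      fun g hg => par_adj Hc f0 g hg
    have hqdist : ∀ g : E.Faces, g ≠ f0 → HG.dist (par Hc f0 g) f0 + 1 = HG.dist g f0 :=
      fun g hg => par_dist Hc f0 g hg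
    have hqne : ∀ g : E.Faces, ∀ hg : g ≠ f0, g ≠ par Hc f0 g := fun g hg => ((Hgraph_adj E hconn r _ _).1 (hqadj g hg)).1
    have hexw : ∀ (g : E.Faces), g ≠ f0 → ∃ e : G.edgeSet,
        ¬ TEp hconn r e ∧ incid E e g ∧ incid E e (par Hc f0 g) :=
      fun g hg => ((Hgraph_adj E hconn r _ _).1 (hqadj g hg)).2
    choose ew hewNT hewI hewQ using hexw
    have hte_eq : ∀ (w : V) (hw : w ≠ r),
        (((teMap hconn r ⟨w, hw⟩).1 : G.edgeSet) : Sym2 V) = s(w, par hconn r w) :=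
      fun _ _ => rfl
    have hteTE : ∀ (w : V) (hw : w ≠ r), TEp hconn r (teMap hconn r ⟨w, hw⟩).1 :=
      fun w hw => (teMap hconn r ⟨w, hw⟩).2
    have hte_inj : ∀ (w : V) (hw : w ≠ r) (u : V) (hu : u ≠ r),
        (teMap hconn r ⟨w, hw⟩).1 = (teMap hconn r ⟨u, hu⟩).1 → w = u := by
      intro w hw u hu h
      have h2 := (teMap_bijective hconn r).1 (a₁ := ⟨w, hw⟩) (a₂ := ⟨u, hu⟩) (Subtype.ext h)
      exact congrArg Subtype.val h2
    have hew_inj : ∀ (g : E.Faces) (hg : g ≠ f0) (g' : E.Faces) (hg' : g' ≠ f0),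
        ew g hg = ew g' hg' → g = g' := by
      intro g hg g' hg' h
      by_contra hgg
      have h1 := hewI g hg
      have h2 := hewQ g hg
      have h3 : incid E (ew g hg) g' := by rw [h]; exact hewI g' hg'
      have h4 : incid E (ew g hg) (par Hc f0 g') := by rw [h]; exact hewQ g' hg'
      rw [incid_iff] at h1 h2 h3 h4
      have q1 := hqne g hg
      have q2 := hqne g' hg'
      have d1 := hqdist g hg
      have d2 := hqdist g' hg'
      have hAB : ∀ c : E.Faces,
          (c = E.face (dartOf (ew g hg)) ∨ c = E.face (dartOf (ew g hg)).symm) →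
          c = g ∨ c = g' := by
        intro c hc
        rcases h1 with h1 | h1 <;> rcases h3 with h3 | h3
        · exact absurd (h1.trans h3.symm) hgg
        · rcases hc with hc | hc
          · exact Or.inl (hc.trans h1.symm)
          · exact Or.inr (hc.trans h3.symm)
        · rcases hc with hc | hc
          · exact Or.inr (hc.trans h3.symm)
          · exact Or.inl (hc.trans h1.symm)
        · exact absurd (h1.trans h3.symm) hgg
      have hqg : par Hc f0 g = g' := (hAB _ h2).resolve_left (fun hh => q1 hh.symm)
      have hqg' : par Hc f0 g' = g := (hAB _ h4).resolve_right (fun hh => q2 hh.symm)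
      rw [hqg] at d1
      rw [hqg'] at d2
      omega
    have hplcard : Fintype.card V + Fintype.card E.Faces = Fintype.card G.edgeSet + 2 := by
      have h := hpl
      rw [RotSys.IsPlanar] at h
      rwa [Nat.card_eq_fintype_card, Nat.card_eq_fintype_card, Nat.card_eq_fintype_card] at h
    have hV1 : 1 ≤ Fintype.card V := Fintype.card_pos_iff.2 ⟨r⟩
    have hF1 : 1 ≤ Fintype.card E.Faces := Fintype.card_pos_iff.2 ⟨f0⟩
    have hew'_surj : ∀ e : G.edgeSet, ¬ TEp hconn r e → ∃ (g : E.Faces) (hg : g ≠ f0),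
        ew g hg = e := by
      set ew' : {g : E.Faces // g ≠ f0} → {e : G.edgeSet // ¬ TEp hconn r e} :=
        fun g => ⟨ew g.1 g.2, hewNT g.1 g.2⟩ with hew'def
      have hinj : Function.Injective ew' := by
        intro a b h
        exact Subtype.ext (hew_inj a.1 a.2 b.1 b.2 (congrArg Subtype.val h))
      have hcards : Fintype.card {g : E.Faces // g ≠ f0}
          = Fintype.card {e : G.edgeSet // ¬ TEp hconn r e} := by
        rw [Fintype.card_subtype_compl, Fintype.card_subtype_eq, card_NT hconn r]
        omega
      have hsurj := ((Fintype.bijective_iff_injective_and_card ew').2 ⟨hinj, hcards⟩).2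
      intro e he
      obtain ⟨⟨g, hg⟩, hgeq⟩ := hsurj ⟨e, he⟩
      exact ⟨g, hg, congrArg Subtype.val hgeq⟩
    set M : Set ((V ⊕ G.edgeSet ⊕ E.Faces) × (V ⊕ G.edgeSet ⊕ E.Faces)) :=
      {p | (∃ (w : V) (hw : w ≠ r),
              p = (Sum.inl w, Sum.inr (Sum.inl (teMap hconn r ⟨w, hw⟩).1)))
        ∨ (∃ (g : E.Faces) (hg : g ≠ f0),
              p = (Sum.inr (Sum.inl (ew g hg)), Sum.inr (Sum.inr g)))} with hMdef
    have hMmem : ∀ p, p ∈ M ↔ ((∃ (w : V) (hw : w ≠ r),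
              p = (Sum.inl w, Sum.inr (Sum.inl (teMap hconn r ⟨w, hw⟩).1)))
        ∨ (∃ (g : E.Faces) (hg : g ≠ f0),
              p = (Sum.inr (Sum.inl (ew g hg)), Sum.inr (Sum.inr g)))) := fun p => Iff.rfl
    have hM1cov : ∀ (w : V) (hw : w ≠ r),
        (Sum.inl w : V ⊕ G.edgeSet ⊕ E.Faces) ⋖ Sum.inr (Sum.inl (teMap hconn r ⟨w, hw⟩).1) := by
      intro w hw
      apply (fp_covBy_ve E _ _).2
      rw [hte_eq w hw]
      exact Sym2.mem_mk_left _ _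
    have hM2cov : ∀ (g : E.Faces) (hg : g ≠ f0),
        (Sum.inr (Sum.inl (ew g hg)) : V ⊕ G.edgeSet ⊕ E.Faces) ⋖ Sum.inr (Sum.inr g) :=
      fun g hg => (fp_covBy_ef E _ _).2 (hewI g hg)
    have hmatch : IsMatching M := by
      constructor
      · rintro p hp
        rcases (hMmem p).1 hp with ⟨w, hw, rfl⟩ | ⟨g, hg, rfl⟩
        · exact hM1cov w hw
        · exact hM2cov g hg
      · rintro p hp q hq hpq
        rcases (hMmem p).1 hp with ⟨w, hw, rfl⟩ | ⟨g, hg, rfl⟩ <;>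
          rcases (hMmem q).1 hq with ⟨u, hu, rfl⟩ | ⟨g', hg', rfl⟩
        · have hwu : w ≠ u := by
            intro h; subst h; exact hpq rfl
          exact ⟨fun h => hwu (Sum.inl_injective h),
                 fun h => by simp at h,
                 fun h => by simp at h,
                 fun h => hwu (hte_inj w hw u hu (Sum.inl_injective (Sum.inr_injective h)))⟩
        · exact ⟨fun h => by simp at h,
                 fun h => by simp at h,
                 fun h => hewNT g' hg'
                   (by rw [← Sum.inl_injective (Sum.inr_injective h)]; exact hteTE w hw),
                 fun h => by simp at h⟩
        · exact ⟨fun h => by simp at h,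
                 fun h => hewNT g hg
                   (by rw [Sum.inl_injective (Sum.inr_injective h)]; exact hteTE u hu),
                 fun h => by simp at h,
                 fun h => by simp at h⟩
        · have hgg : g ≠ g' := by
            intro h; subst h; exact hpq rfl
          exact ⟨fun h => hgg (hew_inj g hg g' hg' (Sum.inl_injective (Sum.inr_injective h))),
                 fun h => by simp at h,
                 fun h => by simp at h,
                 fun h => hgg (Sum.inr_injective (Sum.inr_injective h))⟩
    have edge_path : ∀ (l : List ((V ⊕ G.edgeSet ⊕ E.Faces) × (V ⊕ G.edgeSet ⊕ E.Faces)))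
        (w : V) (hw : w ≠ r) (z : V ⊕ G.edgeSet ⊕ E.Faces),
        IsMPathSteps M (Sum.inr (Sum.inl (teMap hconn r ⟨w, hw⟩).1)) l z →
        ∃ (u : V) (hu : u ≠ r), z = Sum.inr (Sum.inl (teMap hconn r ⟨u, hu⟩).1)
          ∧ (l = [] → u = w) ∧ (l ≠ [] → G.dist u r < G.dist w r) := by
      intro l
      induction l with
      | nil =>
        intro w hw z hz
        have hz' : (Sum.inr (Sum.inl (teMap hconn r ⟨w, hw⟩).1) :
            V ⊕ G.edgeSet ⊕ E.Faces) = z := hz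
        exact ⟨w, hw, hz'.symm, fun _ => rfl, fun h => absurd rfl h⟩
      | cons p rest ih =>
        rcases p with ⟨x, y'⟩
        intro w hw z hz
        have hz' : (x ⋖ (Sum.inr (Sum.inl (teMap hconn r ⟨w, hw⟩).1) :
              V ⊕ G.edgeSet ⊕ E.Faces))
            ∧ (x, y') ∈ M
            ∧ (Sum.inr (Sum.inl (teMap hconn r ⟨w, hw⟩).1) :
                V ⊕ G.edgeSet ⊕ E.Faces) ≠ y'
            ∧ IsMPathSteps M y' rest z := hz
        obtain ⟨hcov, hmem, hne2, hrest⟩ := hz'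
        have hlt := (fp_lt_iff E _ _).1 hcov.1
        cases hlt with
        | @ab v e' hI =>
          rcases (hMmem _).1 hmem with ⟨w2, hw2, heq⟩ | ⟨g, hg, heq⟩
          · have e1 : v = w2 := Sum.inl_injective (congrArg Prod.fst heq)
            have e2 : y' = Sum.inr (Sum.inl (teMap hconn r ⟨w2, hw2⟩).1) :=
              congrArg Prod.snd heq
            have hI' : v ∈ s(w, par hconn r w) := hI
            have hvw : v = par hconn r w := by
              rcases Sym2.mem_iff.1 hI' with h | h
              · exfalso
                apply hne2
                rw [e2]
                subst e1
                subst h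
                rfl
              · exact h
            have hdw := par_dist hconn r w hw
            obtain ⟨u, hu, hzu, hnil, hltd⟩ := ih w2 hw2 z (by rw [← e2]; exact hrest)
            refine ⟨u, hu, hzu, fun h => absurd h (List.cons_ne_nil _ _), fun _ => ?_⟩
            have hdu : G.dist u r ≤ G.dist w2 r := by
              by_cases hr : rest = []
              · rw [hnil hr]
              · exact le_of_lt (hltd hr)
            have : G.dist w2 r + 1 = G.dist w r := by
              rw [← e1, hvw] at hw2 ⊢
              exact hdw
            omega
          · exfalso
            have := congrArg Prod.fst heq
            simp at this
    have face_path : ∀ (l : List ((V ⊕ G.edgeSet ⊕ E.Faces) × (V ⊕ G.edgeSet ⊕ E.Faces)))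
        (g : E.Faces) (z : V ⊕ G.edgeSet ⊕ E.Faces),
        IsMPathSteps M (Sum.inr (Sum.inr g)) l z →
        ∃ g' : E.Faces, z = Sum.inr (Sum.inr g')
          ∧ (l = [] → g' = g) ∧ (l ≠ [] → HG.dist g f0 < HG.dist g' f0) := by
      intro l
      induction l with
      | nil =>
        intro g z hz
        have hz' : (Sum.inr (Sum.inr g) : V ⊕ G.edgeSet ⊕ E.Faces) = z := hz
        exact ⟨g, hz'.symm, fun _ => rfl, fun h => absurd rfl h⟩
      | cons p rest ih =>
        rcases p with ⟨x, y'⟩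
        intro g z hz
        have hz' : (x ⋖ (Sum.inr (Sum.inr g) : V ⊕ G.edgeSet ⊕ E.Faces))
            ∧ (x, y') ∈ M
            ∧ (Sum.inr (Sum.inr g) : V ⊕ G.edgeSet ⊕ E.Faces) ≠ y'
            ∧ IsMPathSteps M y' rest z := hz
        obtain ⟨hcov, hmem, hne2, hrest⟩ := hz'
        have hlt := (fp_lt_iff E _ _).1 hcov.1
        cases hlt with
        | @bc e f' hJ =>
          rcases (hMmem _).1 hmem with ⟨w2, hw2, heq⟩ | ⟨g1, hg1, heq⟩
          · simp at heq
          · have e1 : e = ew g1 hg1 :=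
              Sum.inl_injective (Sum.inr_injective (congrArg Prod.fst heq))
            have e2 : y' = Sum.inr (Sum.inr g1) := congrArg Prod.snd heq
            have hgne : g ≠ g1 := by
              intro h
              apply hne2
              rw [e2, h]
            -- g = par of g1
            have hJ' : incid E (ew g1 hg1) g := by rw [← e1]; exact hJ
            have h1 := hewI g1 hg1
            have h2 := hewQ g1 hg1
            rw [incid_iff] at hJ' h1 h2
            have hgq : g = par Hc f0 g1 := by
              rcases h1 with h1 | h1 <;> rcases hJ' with hJ' | hJ'
              · exact absurd (hJ'.trans h1.symm) hgne
              · rcases h2 with h2 | h2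
                · exact absurd (h2.trans h1.symm) (fun hh => hqne g1 hg1 hh.symm)
                · exact hJ'.trans h2.symm
              · rcases h2 with h2 | h2
                · exact hJ'.trans h2.symm
                · exact absurd (h2.trans h1.symm) (fun hh => hqne g1 hg1 hh.symm)
              · exact absurd (hJ'.trans h1.symm) hgne
            have hd1 : HG.dist g f0 + 1 = HG.dist g1 f0 := by
              rw [hgq]
              exact hqdist g1 hg1
            obtain ⟨g', hzg, hnil, hltd⟩ := ih g1 z (by rw [← e2]; exact hrest)
            refine ⟨g', hzg, fun h => absurd h (List.cons_ne_nil _ _), fun _ => ?_⟩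
            have : HG.dist g1 f0 ≤ HG.dist g' f0 := by
              by_cases hr : rest = []
              · rw [hnil hr]
              · exact le_of_lt (hltd hr)
            omega
        | @ac a b c hI2 hJ2 =>
          exfalso
          exact hcov.2 ((fp_lt_iff E _ _).2 (TriLt.ab hI2)) ((fp_lt_iff E _ _).2 (TriLt.bc hJ2))
    have hacyc : IsAcyclicMatching M := by
      refine ⟨hmatch, ?_⟩
      intro y l h
      by_contra hl
      cases l with
      | nil => exact hl rfl
      | cons p rest =>
        rcases p with ⟨x, y'⟩
        have hz' : (x ⋖ y) ∧ (x, y') ∈ M ∧ y ≠ y' ∧ IsMPathSteps M y' rest y := h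
        obtain ⟨hcov, hmem, hne2, hrest⟩ := hz'
        have hlt := (fp_lt_iff E _ _).1 hcov.1
        cases hlt with
        | @ab v e hI =>
          rcases (hMmem _).1 hmem with ⟨w2, hw2, heq⟩ | ⟨g, hg, heq⟩
          · have e1 : v = w2 := Sum.inl_injective (congrArg Prod.fst heq)
            have e2 : y' = Sum.inr (Sum.inl (teMap hconn r ⟨w2, hw2⟩).1) :=
              congrArg Prod.snd heq
            obtain ⟨u, hu, hzu, hnil, hltd⟩ := edge_path rest w2 hw2 _
              (by rw [← e2]; exact hrest)
            have hee : e = (teMap hconn r ⟨u, hu⟩).1 :=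
              Sum.inl_injective (Sum.inr_injective hzu)
            have hI' : v ∈ s(u, par hconn r u) := by
              have : v ∈ ((teMap hconn r ⟨u, hu⟩).1 : Sym2 V) := by rw [← hee]; exact hI
              exact this
            by_cases hr : rest = []
            · apply hne2
              rw [e2]
              have huw : u = w2 := hnil hr
              subst huw
              exact hzu
            · have hltd' := hltd hr
              have hdu := par_dist hconn r u hu
              rcases Sym2.mem_iff.1 hI' with h' | h'
              · rw [e1] at h'
                subst h'
                omega
              · rw [e1] at h'
                have : G.dist w2 r + 1 = G.dist u r := by rw [h']; exact hdu
                omega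
          · simp at heq
        | @bc e f hJ =>
          rcases (hMmem _).1 hmem with ⟨w2, hw2, heq⟩ | ⟨g1, hg1, heq⟩
          · simp at heq
          · have e1 : e = ew g1 hg1 :=
              Sum.inl_injective (Sum.inr_injective (congrArg Prod.fst heq))
            have e2 : y' = Sum.inr (Sum.inr g1) := congrArg Prod.snd heq
            obtain ⟨g', hzg, hnil, hltd⟩ := face_path rest g1 _ (by rw [← e2]; exact hrest)
            have hfg : f = g' := Sum.inr_injective (Sum.inr_injective hzg)
            have hgne : f ≠ g1 := by
              intro h
              apply hne2
              rw [e2, h]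
            have hJ' : incid E (ew g1 hg1) f := by rw [← e1]; exact hJ
            have h1 := hewI g1 hg1
            have h2 := hewQ g1 hg1
            rw [incid_iff] at hJ' h1 h2
            have hgq : f = par Hc f0 g1 := by
              rcases h1 with h1 | h1 <;> rcases hJ' with hJ' | hJ'
              · exact absurd (hJ'.trans h1.symm) hgne
              · rcases h2 with h2 | h2
                · exact absurd (h2.trans h1.symm) (fun hh => hqne g1 hg1 hh.symm)
                · exact hJ'.trans h2.symm
              · rcases h2 with h2 | h2
                · exact hJ'.trans h2.symm
                · exact absurd (h2.trans h1.symm) (fun hh => hqne g1 hg1 hh.symm)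
              · exact absurd (hJ'.trans h1.symm) hgne
            have hd1 : HG.dist f f0 + 1 = HG.dist g1 f0 := by
              rw [hgq]; exact hqdist g1 hg1
            by_cases hr : rest = []
            · exact hgne (hfg.trans (hnil hr))
            · have := hltd hr
              rw [← hfg] at this
              omega
        | @ac a b c hI2 hJ2 =>
          exact hcov.2 ((fp_lt_iff E _ _).2 (TriLt.ab hI2)) ((fp_lt_iff E _ _).2 (TriLt.bc hJ2))
    have hcrit : ∀ x : V ⊕ G.edgeSet ⊕ E.Faces, triRk x = 1 → ¬ MCritical M x := by
      rintro (v | e | f) hx hcrit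
      · simp [triRk] at hx
      · by_cases hTE : TEp hconn r e
        · obtain ⟨v, hv, hve⟩ := hTE
          have hee : e = (teMap hconn r ⟨v, hv⟩).1 := Subtype.ext hve
          exact (hcrit _ ((hMmem _).2 (Or.inl ⟨v, hv, rfl⟩))).2 (by rw [hee])
        · obtain ⟨g, hg, hge⟩ := hew'_surj e hTE
          exact (hcrit _ ((hMmem _).2 (Or.inr ⟨g, hg, rfl⟩))).1 (by rw [hge])
      · simp [triRk] at hx
    constructor
    · exact le_refl 2
    · rintro (v | e | f) <;> simp [fpRank, triRk]
    · exact ⟨Sum.inr (Sum.inr f0), rfl⟩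
    · -- two_covers
      rintro (v | e | f) hx
      · simp [fpRank, triRk] at hx
      · have hset : {y : V ⊕ G.edgeSet ⊕ E.Faces | Sum.inr (Sum.inl e) ⋖ y}
            = (fun f : E.Faces => (Sum.inr (Sum.inr f) : V ⊕ G.edgeSet ⊕ E.Faces))
              '' {f : E.Faces | incid E e f} := by
          ext y
          rw [Set.mem_setOf_eq, fp_covers_edge]
          constructor
          · rintro ⟨f, rfl, hf⟩; exact ⟨f, hf, rfl⟩
          · rintro ⟨f, hf, rfl⟩; exact ⟨f, rfl, hf⟩
        rw [hset, Set.ncard_image_of_injective _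
          (fun a b h => Sum.inr_injective (Sum.inr_injective h))]
        have hset2 : {f : E.Faces | incid E e f}
            = {E.face (dartOf e), E.face (dartOf e).symm} := by
          ext f
          rw [Set.mem_setOf_eq, incid_iff]
          simp [Set.mem_insert_iff, Set.mem_singleton_iff]
        rw [hset2]
        exact Set.ncard_pair (face_ne_symm E hconn hne' hpl heul (dartOf e))
      · simp [fpRank, triRk] at hx
    · -- even_mid
      intro y z hy hz
      rcases y with v | e | f
      · simp [fpRank, triRk] at hy
      · simp [fpRank, triRk] at hy
      rcases z with v | e | g
      swap
      · simp [fpRank, triRk] at hz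
      swap
      · simp [fpRank, triRk] at hz
      have hset : {x : V ⊕ G.edgeSet ⊕ E.Faces |
            (fpRank E).rk x = 2 - 1 ∧ Sum.inl v ⋖ x ∧ x ⋖ Sum.inr (Sum.inr f)}
          = (fun e : G.edgeSet => (Sum.inr (Sum.inl e) : V ⊕ G.edgeSet ⊕ E.Faces))
            '' {e : G.edgeSet | v ∈ (e : Sym2 V) ∧ incid E e f} := by
        ext x
        constructor
        · rintro ⟨h1, h2, h3⟩
          rcases x with w | e | g
          · simp [fpRank, triRk] at h1
          · exact ⟨e, ⟨(fp_covBy_ve E v e).1 h2, (fp_covBy_ef E e f).1 h3⟩, rfl⟩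
          · simp [fpRank, triRk] at h1
        · rintro ⟨e, ⟨he1, he2⟩, rfl⟩
          exact ⟨rfl, (fp_covBy_ve E v e).2 he1, (fp_covBy_ef E e f).2 he2⟩
      rw [hset, Set.ncard_image_of_injective _
        (fun a b h => Sum.inl_injective (Sum.inr_injective h))]
      rw [← Nat.card_coe_set_eq]
      simp only [Set.coe_setOf]
      exact even_card_mid E hconn hne' hpl heul v f
    · -- matching
      exact ⟨M, hacyc, fun x hx => hcrit x hx⟩
  · -- every vertex covered by even number of edges
    intro v
    have hset : {y : V ⊕ G.edgeSet ⊕ E.Faces | Sum.inl v ⋖ y}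
        = (fun e : G.edgeSet => (Sum.inr (Sum.inl e) : V ⊕ G.edgeSet ⊕ E.Faces))
          '' {e : G.edgeSet | v ∈ (e : Sym2 V)} := by
      ext y
      rw [Set.mem_setOf_eq, Stmt12Aux.fp_covers_vertex]
      constructor
      · rintro ⟨e, rfl, he⟩; exact ⟨e, he, rfl⟩
      · rintro ⟨e, he, rfl⟩; exact ⟨e, rfl, he⟩
    rw [hset, Set.ncard_image_of_injective _
      (fun a b h => Sum.inl_injective (Sum.inr_injective h))]
    rw [← Nat.card_coe_set_eq]
    simp only [Set.coe_setOf]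
    rw [Nat.card_eq_fintype_card]
    have : Fintype.card {e : G.edgeSet // v ∈ (e : Sym2 V)} = G.degree v := by
      rw [Fintype.card_subtype]
      exact Stmt12Aux.card_filter_incidence v
    rw [this]
    exact heul v
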